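/- Let ψ₀, ψ₁ ∈ ℂ^M be orthonormal, let Φ = (e₀ ⊗ ψ₀ + e₁ ⊗ ψ₁)/√2 ∈ ℂ² ⊗ ℂ^M where e₀, e₁ is the standard basis of ℂ², and let v be a 2×2 unitary matrix with entries v_{ij}. Let SWAP : ℂ^M ⊗ ℂ^M → ℂ^M ⊗ ℂ^M be the linear map with x ⊗ y ↦ y ⊗ x. Then for every ψ ∈ ℂ^M, writing λ₀ = ⟨ψ₀, ψ⟩ and λ₁ = ⟨ψ₁, ψ⟩, the vector (⟨Φ| ⊗ I_M) · (vᵀ ⊗ I_M ⊗ I_M) · (I_{ℂ²} ⊗ SWAP) · (Φ ⊗ ψ) ∈ ℂ^M equals (1/2)·[(v₀₀λ₀ + v₀₁λ₁)ψ₀ + (v₁₀λ₀ + v₁₁λ₁)ψ₁], where the three tensor factors are ordered as ℂ² ⊗ ℂ^M ⊗ ℂ^M, vᵀ acts on the first factor, SWAP on the last two factors, and ⟨Φ| ⊗ I_M maps ℂ² ⊗ ℂ^M ⊗ ℂ^M to the last ℂ^M factor by pairing the first two factors with Φ. -/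
import Mathlib


open Matrix
open scoped Kronecker

/-- The state `Φ = (e₀ ⊗ ψ₀ + e₁ ⊗ ψ₁)/√2 ∈ ℂ² ⊗ ℂ^M`. -/
noncomputable def PhiVec (M : ℕ) (ψ₀ ψ₁ : Fin M → ℂ) : Fin 2 × Fin M → ℂ :=
  fun p => (if p.1 = 0 then ψ₀ p.2 else ψ₁ p.2) / (Real.sqrt 2 : ℂ)

/-- The SWAP operator on `ℂ^M ⊗ ℂ^M`, `x ⊗ y ↦ y ⊗ x`. -/
def SWAPmat (M : ℕ) : Matrix (Fin M × Fin M) (Fin M × Fin M) ℂ :=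
  Matrix.of fun p q => if p.1 = q.2 ∧ p.2 = q.1 then 1 else 0

/-- The partial bra `⟨Φ| ⊗ I : ℂ² ⊗ ℂ^M ⊗ ℂ^M → ℂ^M`, pairing the first two tensor
factors with `Φ`. -/
noncomputable def braPhi (M : ℕ) (ψ₀ ψ₁ : Fin M → ℂ) :
    Matrix (Fin M) (Fin 2 × Fin M × Fin M) ℂ :=
  Matrix.of fun m' p =>
    (starRingEnd ℂ) (PhiVec M ψ₀ ψ₁ (p.1, p.2.1)) * (if p.2.2 = m' then 1 else 0)

/-- **Correctness of the probabilistic interior protocol.** Applying `I ⊗ SWAP`, then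
`vᵀ ⊗ I ⊗ I`, to `Φ ⊗ ψ` and projecting the first two factors onto `Φ` yields
`½[(v₀₀λ₀ + v₀₁λ₁)ψ₀ + (v₁₀λ₀ + v₁₁λ₁)ψ₁]`, where `λ_i = ⟨ψ_i, ψ⟩`. -/
theorem probabilistic_protocol_correct
    (M : ℕ) (ψ₀ ψ₁ : Fin M → ℂ)
    (h00 : star ψ₀ ⬝ᵥ ψ₀ = 1) (h11 : star ψ₁ ⬝ᵥ ψ₁ = 1) (h01 : star ψ₀ ⬝ᵥ ψ₁ = 0)
    (v : Matrix (Fin 2) (Fin 2) ℂ) (hv : vᴴ * v = 1) :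
    ∀ ψ : Fin M → ℂ,
      braPhi M ψ₀ ψ₁ *ᵥ
        ((vᵀ ⊗ₖ (1 : Matrix (Fin M × Fin M) (Fin M × Fin M) ℂ)) *ᵥ
          (((1 : Matrix (Fin 2) (Fin 2) ℂ) ⊗ₖ SWAPmat M) *ᵥ
            fun p : Fin 2 × Fin M × Fin M =>
              PhiVec M ψ₀ ψ₁ (p.1, p.2.1) * ψ p.2.2))
      = (1 / 2 : ℂ) •
          ((v 0 0 * (star ψ₀ ⬝ᵥ ψ) + v 0 1 * (star ψ₁ ⬝ᵥ ψ)) • ψ₀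
            + (v 1 0 * (star ψ₀ ⬝ᵥ ψ) + v 1 1 * (star ψ₁ ⬝ᵥ ψ)) • ψ₁) := by
  intro ψ
  have hswap : ∀ (f : Fin 2 × Fin M × Fin M → ℂ) (a : Fin 2) (m n : Fin M),
      (((1 : Matrix (Fin 2) (Fin 2) ℂ) ⊗ₖ SWAPmat M) *ᵥ f) (a, m, n) = f (a, n, m) := by
    intro f a m n
    simp [mulVec, dotProduct, SWAPmat, Matrix.one_apply, Fintype.sum_prod_type, ite_and,
      mul_ite, mul_zero, mul_one, Finset.sum_ite_eq, Finset.sum_ite_eq']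
  have hv' : ∀ (g : Fin 2 × Fin M × Fin M → ℂ) (a : Fin 2) (m n : Fin M),
      ((vᵀ ⊗ₖ (1 : Matrix (Fin M × Fin M) (Fin M × Fin M) ℂ)) *ᵥ g) (a, m, n)
        = ∑ b, v b a * g (b, m, n) := by
    intro g a m n
    simp [mulVec, dotProduct, Matrix.one_apply, Fintype.sum_prod_type, ite_and,
      mul_ite, mul_zero, mul_one, Finset.sum_ite_eq, Finset.sum_ite_eq']
  funext m'
  have hs : ((Real.sqrt 2 : ℝ) : ℂ) * ((Real.sqrt 2 : ℝ) : ℂ) = 2 := by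
    rw [← Complex.ofReal_mul, Real.mul_self_sqrt (by norm_num)]
    norm_num
  have hs0 : ((Real.sqrt 2 : ℝ) : ℂ) ≠ 0 := by
    intro h
    rw [h] at hs; norm_num at hs
  have hcomp :
      ((vᵀ ⊗ₖ (1 : Matrix (Fin M × Fin M) (Fin M × Fin M) ℂ)) *ᵥ
          (((1 : Matrix (Fin 2) (Fin 2) ℂ) ⊗ₖ SWAPmat M) *ᵥ
            fun p : Fin 2 × Fin M × Fin M =>
              PhiVec M ψ₀ ψ₁ (p.1, p.2.1) * ψ p.2.2))
        = fun p : Fin 2 × Fin M × Fin M =>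
            ∑ b, v b p.1 * (PhiVec M ψ₀ ψ₁ (b, p.2.2) * ψ p.2.1) := by
    funext p
    obtain ⟨a, m, n⟩ := p
    rw [hv']
    simp only [hswap]
  rw [hcomp]
  simp only [mulVec, dotProduct, braPhi, Matrix.of_apply, Fintype.sum_prod_type,
    mul_ite, mul_zero, mul_one, Finset.sum_ite_eq', Finset.mem_univ, if_true]
  simp only [ite_mul, zero_mul, Finset.sum_ite_eq', Finset.mem_univ, if_true]
  simp only [PhiVec, Fin.sum_univ_two, Fin.isValue, if_true, one_ne_zero, if_false,
    map_div₀, Complex.conj_ofReal, Pi.smul_apply, Pi.add_apply, smul_eq_mul,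
    Pi.star_apply, RCLike.star_def]
  simp only [Finset.mul_sum, Finset.sum_mul, ← Finset.sum_add_distrib]
  apply Finset.sum_congr rfl
  intro i _
  field_simp
  simp only [pow_two, hs]
  ring
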